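/- Every polymatroidal ideal satisfies the symmetric exchange property: for u,v ∈ G(I) with deg_{x_i}(v) > deg_{x_i}(u), there exists j with deg_{x_j}(v) < deg_{x_j}(u) such that both x_i(u/x_j) ∈ G(I) and x_j(v/x_i) ∈ G(I). -/

import Mathlib

/-- A monomial in `n` variables, given by its exponent vector. -/
abbrev Mon (n : ℕ) := Fin n → ℕ

/-- Total degree of a monomial. -/
def mdeg {n : ℕ} (u : Mon n) : ℕ := ∑ i, u i

/-- The exponent vector of `x_j * (u / x_i)`. -/
def exch {n : ℕ} (u : Mon n) (i j : Fin n) : Mon n :=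
  fun l => u l - (if l = i then 1 else 0) + (if l = j then 1 else 0)

/-- Membership of the monomial `w` in the monomial ideal generated by the set `G`. -/
def memI {n : ℕ} (G : Set (Mon n)) (w : Mon n) : Prop :=
  ∃ u ∈ G, ∀ l, u l ≤ w l

/-- `G` (the set of minimal generators, all of one degree) is polymatroidal: the
exchange property holds. -/
def IsPolymatroidal {n : ℕ} (G : Set (Mon n)) : Prop :=
  ∀ u ∈ G, ∀ v ∈ G, ∀ i, v i < u i → ∃ j, u j < v j ∧ memI G (exch u i j)

/-- The (strict) lexicographic order on monomials of a common degree, induced by the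
variable ordering `x_{σ 0} > x_{σ 1} > ⋯ > x_{σ (n-1)}`. -/
def lexGT {n : ℕ} (σ : Fin n → Fin n) (u v : Mon n) : Prop :=
  ∃ i, v (σ i) < u (σ i) ∧ ∀ k, k < i → u (σ k) = v (σ k)

/-- `u ≥_lex v` with respect to the variable ordering given by `σ`. -/
def lexGE {n : ℕ} (σ : Fin n → Fin n) (u v : Mon n) : Prop :=
  u = v ∨ lexGT σ u v

/-- The (strict) reverse lexicographic order on monomials of a common degree, induced by
the variable ordering `x_{σ 0} > x_{σ 1} > ⋯ > x_{σ (n-1)}`. -/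
def rlexGT {n : ℕ} (σ : Fin n → Fin n) (u v : Mon n) : Prop :=
  ∃ i, u (σ i) < v (σ i) ∧ ∀ k, i < k → u (σ k) = v (σ k)

/-- `G` has linear quotients with respect to the order `gt`: for every `u ∈ G` the colon
ideal `(v ∈ G : gt v u) : u` is generated by variables, i.e. for every `v ∈ G` with
`gt v u` there is a variable `x_i` dividing `v : u` with `x_i·u` in the ideal generated
by the `gt`-larger generators. -/
def LinQuot {n : ℕ} (G : Set (Mon n)) (gt : Mon n → Mon n → Prop) : Prop :=
  ∀ u ∈ G, ∀ v ∈ G, gt v u →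
    ∃ i, u i < v i ∧
      ∃ w ∈ G, gt w u ∧ ∀ l, w l ≤ u l + (if l = i then 1 else 0)

section MatroidAux

open Set Matroid

variable {α : Type*} {M : Matroid α} {A B I : Set α} {x : α}

private lemma matroid_base_of_indep [RankFinite M] (hI : M.Indep I) (hB : M.IsBase B)
    (h : B.encard ≤ I.encard) : M.IsBase I := by
  obtain ⟨B', hB', hIB'⟩ := hI.exists_isBase_superset
  have hcard : B'.encard ≤ I.encard := by rw [hB'.encard_eq_encard_of_isBase hB]; exact h
  rwa [hB'.finite.eq_of_subset_of_encard_le' hIB' hcard]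

private lemma matroid_fund [RankFinite M] (hB : M.IsBase B) (hxE : x ∈ M.E) (hxB : x ∉ B) :
    x ∈ M.closure {y ∈ B | M.Indep (insert x (B \ {y}))} := by
  set S := {y ∈ B | M.Indep (insert x (B \ {y}))} with hSdef
  by_contra hxS
  have hSB : S ⊆ B := fun y hy => hy.1
  have hSx : M.Indep (insert x S) :=
    (((hB.indep.subset hSB).notMem_closure_iff hxE).mp hxS).1
  obtain ⟨J, hJ, hSJ⟩ := hSx.subset_isBasis_of_subset (insert_subset_insert hSB)
      (insert_subset hxE hB.subset_ground)
  have hBbasis : M.IsBasis B (insert x B) :=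
    hB.isBasis_of_subset (insert_subset hxE hB.subset_ground) (subset_insert _ _)
  have hcard : J.encard = B.encard := hJ.encard_eq_encard hBbasis
  have hxJ : x ∈ J := hSJ (mem_insert _ _)
  set K := J \ {x} with hKdef
  have hKB : K ⊆ B := by
    rintro z ⟨hzJ, hzx⟩
    rcases hJ.subset hzJ with rfl | h
    · exact absurd rfl hzx
    · exact h
  have hKcard : K.encard + 1 = J.encard := encard_diff_singleton_add_one hxJ
  have h5 : (B \ K).encard + K.encard = B.encard := encard_diff_add_encard_of_subset hKB
  have hKfin : K.encard ≠ ⊤ := ((hB.finite.subset hKB).encard_lt_top).ne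
  have h6 : (B \ K).encard = 1 := by
    have h7 : (B \ K).encard + K.encard = 1 + K.encard := by
      rw [h5, ← hcard, ← hKcard, add_comm]
    exact WithTop.add_right_cancel hKfin h7
  obtain ⟨y₀, hy₀⟩ := encard_eq_one.mp h6
  have hy₀BK : y₀ ∈ B \ K := by rw [hy₀]; exact rfl
  have hBK : B \ {y₀} = K := by
    ext z
    constructor
    · rintro ⟨hzB, hzy⟩
      by_contra hzK
      have hz : z ∈ B \ K := ⟨hzB, hzK⟩
      rw [hy₀] at hz
      exact hzy hz
    · intro hzK
      refine ⟨hKB hzK, ?_⟩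
      intro hz
      rw [mem_singleton_iff] at hz
      subst hz
      exact hy₀BK.2 hzK
  have hJK : insert x K = J := by
    rw [hKdef, insert_diff_singleton, insert_eq_of_mem hxJ]
  have hy₀S : y₀ ∈ S := by
    refine ⟨hy₀BK.1, ?_⟩
    rw [hBK, hJK]
    exact hJ.indep
  have hy₀K : y₀ ∈ K := by
    refine ⟨hSJ (mem_insert_of_mem _ hy₀S), ?_⟩
    intro h
    rw [mem_singleton_iff] at h
    subst h
    exact hxB hy₀BK.1
  exact hy₀BK.2 hy₀K

private lemma matroid_symexch [RankFinite M] (hA : M.IsBase A) (hB : M.IsBase B)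
    (hxA : x ∈ A) (hxB : x ∉ B) :
    ∃ y ∈ B, y ∉ A ∧ M.IsBase (insert y (A \ {x})) ∧ M.IsBase (insert x (B \ {y})) := by
  have hxE : x ∈ M.E := hA.subset_ground hxA
  have h1 : x ∉ M.closure (A \ {x}) := hA.indep.notMem_closure_diff_of_mem hxA
  have h2 := matroid_fund hB hxE hxB
  have hns : ¬ {y ∈ B | M.Indep (insert x (B \ {y}))} ⊆ M.closure (A \ {x}) := by
    intro hsub
    exact h1 (Matroid.closure_subset_closure_of_subset_closure hsub h2)
  obtain ⟨y, hyS, hycl⟩ := not_subset.mp hns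
  have hyB : y ∈ B := hyS.1
  have hyE : y ∈ M.E := hB.subset_ground hyB
  have hyx : y ≠ x := fun h => hxB (h ▸ hyB)
  have hyA : y ∉ A := by
    intro hyA
    exact hycl (M.subset_closure (A \ {x}) (diff_subset.trans hA.subset_ground) ⟨hyA, hyx⟩)
  have hind1 : M.Indep (insert y (A \ {x})) :=
    (((hA.indep.subset diff_subset).notMem_closure_iff hyE).mp hycl).1
  have hbase1 : M.IsBase (insert y (A \ {x})) :=
    matroid_base_of_indep hind1 hA (encard_exchange hyA hxA).ge
  have hbase2 : M.IsBase (insert x (B \ {y})) :=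
    matroid_base_of_indep hyS.2 hB (encard_exchange hxB hyB).ge
  exact ⟨y, hyB, hyA, hbase1, hbase2⟩

end MatroidAux

section BlowUp

variable {n d : ℕ}

def vecF {n : ℕ} (F : Finset (Fin n × ℕ)) : Mon n := fun l => (F.filter fun p => p.1 = l).card

def blow {n : ℕ} (g : Mon n) : Finset (Fin n × ℕ) :=
  Finset.univ.biUnion fun l => (Finset.range (g l)).image fun t => (l, t)

lemma mem_blow {g : Mon n} {p : Fin n × ℕ} : p ∈ blow g ↔ p.2 < g p.1 := by
  obtain ⟨l, t⟩ := p
  simp only [blow, Finset.mem_biUnion, Finset.mem_univ, true_and, Finset.mem_image,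
    Finset.mem_range, Prod.mk.injEq]
  constructor
  · rintro ⟨a, t', ht', rfl, rfl⟩
    exact ht'
  · intro h
    exact ⟨l, t, h, rfl, rfl⟩

lemma vecF_blow (g : Mon n) : vecF (blow g) = g := by
  funext l
  have h : (blow g).filter (fun p => p.1 = l) = (Finset.range (g l)).image fun t => (l, t) := by
    ext ⟨a, t⟩
    simp only [Finset.mem_filter, mem_blow, Finset.mem_image, Finset.mem_range, Prod.mk.injEq]
    constructor
    · rintro ⟨hm, rfl⟩
      exact ⟨t, hm, rfl, rfl⟩
    · rintro ⟨t', ht', rfl, rfl⟩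
      exact ⟨ht', rfl⟩
  show ((blow g).filter fun p => p.1 = l).card = g l
  rw [h, Finset.card_image_of_injective _ (fun a b hab => by simpa using hab), Finset.card_range]

lemma vecF_exch {F : Finset (Fin n × ℕ)} {x y : Fin n × ℕ} (hx : x ∈ F) (hy : y ∉ F)
    (m : Fin n) :
    vecF (insert y (F.erase x)) m
      = vecF F m - (if m = x.1 then 1 else 0) + (if m = y.1 then 1 else 0) := by
  have hy2 : y ∉ (F.erase x).filter fun p => p.1 = m :=
    fun h => hy (Finset.mem_of_mem_erase (Finset.mem_of_mem_filter _ h))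
  have herase : ((F.erase x).filter fun p => p.1 = m).card
      = (F.filter fun p => p.1 = m).card - (if m = x.1 then 1 else 0) := by
    rw [Finset.filter_erase]
    by_cases hxm : x.1 = m
    · rw [Finset.card_erase_of_mem (Finset.mem_filter.mpr ⟨hx, hxm⟩ :
        x ∈ F.filter fun p => p.1 = m), if_pos hxm.symm]
    · rw [Finset.erase_eq_of_notMem
        (fun h : x ∈ F.filter (fun p => p.1 = m) => hxm (Finset.mem_filter.mp h).2),
        if_neg (fun h : m = x.1 => hxm h.symm), Nat.sub_zero]
  show ((insert y (F.erase x)).filter fun p => p.1 = m).card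
      = (F.filter fun p => p.1 = m).card - (if m = x.1 then 1 else 0)
        + (if m = y.1 then 1 else 0)
  rw [Finset.filter_insert]
  by_cases hym : y.1 = m
  · rw [if_pos hym, Finset.card_insert_of_notMem hy2, herase, if_pos hym.symm]
  · rw [if_neg hym, herase, if_neg (fun h : m = y.1 => hym h.symm), Nat.add_zero]

lemma mem_of_memI (G : Set (Mon n)) (hdeg : ∀ u ∈ G, mdeg u = d) {w : Mon n}
    (hw : mdeg w = d) (h : memI G w) : w ∈ G := by
  obtain ⟨g, hg, hle⟩ := h
  have hsum : ∑ l, g l = ∑ l, w l := by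
    have h1 : mdeg g = d := hdeg g hg
    unfold mdeg at h1 hw
    omega
  have hall : ∀ l ∈ Finset.univ, g l = w l := by
    by_contra hne
    push_neg at hne
    obtain ⟨l, _, hl⟩ := hne
    have hlt : ∑ l, g l < ∑ l, w l :=
      Finset.sum_lt_sum (fun i _ => hle i) ⟨l, Finset.mem_univ l, lt_of_le_of_ne (hle l) hl⟩
    omega
  have hgw : g = w := funext fun l => hall l (Finset.mem_univ l)
  rwa [← hgw]

lemma mdeg_exch {w : Mon n} {i j : Fin n} (hwi : 1 ≤ w i) : mdeg (exch w i j) = mdeg w := by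
  unfold mdeg exch
  rw [Finset.sum_add_distrib]
  have h1 : (∑ l : Fin n, if l = j then 1 else 0) = 1 := by simp
  have e1 : (∑ l : Fin n, (w l - if l = i then 1 else 0))
      = (w i - 1) + ∑ l ∈ Finset.univ.erase i, w l := by
    rw [← Finset.add_sum_erase _ _ (Finset.mem_univ i), if_pos rfl]
    congr 1
    exact Finset.sum_congr rfl fun l hl => by
      rw [if_neg (Finset.ne_of_mem_erase hl), Nat.sub_zero]
  have e2 : ∑ l, w l = w i + ∑ l ∈ Finset.univ.erase i, w l :=
    (Finset.add_sum_erase _ _ (Finset.mem_univ i)).symm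
  omega

lemma blow_exchange (G : Set (Mon n)) (hdeg : ∀ u ∈ G, mdeg u = d)
    (hpoly : IsPolymatroidal G) :
    Matroid.ExchangeProperty
      (fun B : Set (Fin n × ℕ) => ∃ F : Finset (Fin n × ℕ), ↑F = B ∧ vecF F ∈ G) := by
  rintro X Y ⟨F1, rfl, hF1⟩ ⟨F2, rfl, hF2⟩ a ⟨haX, haY⟩
  rw [Finset.mem_coe] at haX
  have haY' : a ∉ F2 := fun h => haY (Finset.mem_coe.mpr h)
  have ha1 : 1 ≤ vecF F1 a.1 :=
    Finset.card_pos.mpr ⟨a, (Finset.mem_filter.mpr ⟨haX, rfl⟩ : a ∈ F1.filter fun p => p.1 = a.1)⟩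
  by_cases hcase : vecF F2 a.1 < vecF F1 a.1
  · obtain ⟨j, hj, hmem⟩ := hpoly (vecF F1) hF1 (vecF F2) hF2 a.1 hcase
    have hex : exch (vecF F1) a.1 j ∈ G :=
      mem_of_memI G hdeg (by rw [mdeg_exch ha1]; exact hdeg _ hF1) hmem
    have hnot : ¬ (F2.filter fun p => p.1 = j) ⊆ F1.filter fun p => p.1 = j := by
      intro hsub
      have hc := Finset.card_le_card hsub
      have hv1 : vecF F1 j = (F1.filter fun p => p.1 = j).card := rfl
      have hv2 : vecF F2 j = (F2.filter fun p => p.1 = j).card := rfl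
      omega
    obtain ⟨b, hb2f, hb1f⟩ := Finset.not_subset.mp hnot
    obtain ⟨hb2, hbj⟩ := Finset.mem_filter.mp hb2f
    have hb1 : b ∉ F1 := fun h => hb1f (Finset.mem_filter.mpr ⟨h, hbj⟩)
    refine ⟨b, ⟨Finset.mem_coe.mpr hb2, fun h => hb1 (Finset.mem_coe.mp h)⟩,
      insert b (F1.erase a), by simp, ?_⟩
    have hveq : vecF (insert b (F1.erase a)) = exch (vecF F1) a.1 j := by
      funext m
      rw [vecF_exch haX hb1 m, hbj]
      rfl
    rw [hveq]
    exact hex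
  · have hnot : ¬ (F2.filter fun p => p.1 = a.1) ⊆ (F1.filter fun p => p.1 = a.1).erase a := by
      intro hsub
      have hc := Finset.card_le_card hsub
      rw [Finset.card_erase_of_mem (Finset.mem_filter.mpr ⟨haX, rfl⟩ : a ∈ F1.filter fun p => p.1 = a.1)] at hc
      have hv1 : vecF F1 a.1 = (F1.filter fun p => p.1 = a.1).card := rfl
      have hv2 : vecF F2 a.1 = (F2.filter fun p => p.1 = a.1).card := rfl
      omega
    obtain ⟨b, hb2f, hbe⟩ := Finset.not_subset.mp hnot
    obtain ⟨hb2, hba⟩ := Finset.mem_filter.mp hb2f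
    have hb1 : b ∉ F1 := by
      intro h
      refine hbe (Finset.mem_erase.mpr ⟨?_, Finset.mem_filter.mpr ⟨h, hba⟩⟩)
      intro hba'
      exact haY' (hba' ▸ hb2)
    refine ⟨b, ⟨Finset.mem_coe.mpr hb2, fun h => hb1 (Finset.mem_coe.mp h)⟩,
      insert b (F1.erase a), by simp, ?_⟩
    have hveq : vecF (insert b (F1.erase a)) = vecF F1 := by
      funext m
      rw [vecF_exch haX hb1 m, hba]
      by_cases h : m = a.1
      · rw [if_pos h, h]
        omega
      · rw [if_neg h]
        omega
    rw [hveq]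
    exact hF1

end BlowUp

/-- Symmetric exchange property of polymatroidal ideals: for `u, v ∈ G(I)` with
`deg_{x_i}(v) > deg_{x_i}(u)` there is `j` with `deg_{x_j}(v) < deg_{x_j}(u)` such that
both `x_i(u/x_j)` and `x_j(v/x_i)` belong to `G(I)`. -/
theorem stmt_15 {n d : ℕ} (G : Set (Mon n)) (hdeg : ∀ u ∈ G, mdeg u = d)
    (hpoly : IsPolymatroidal G) :
    ∀ u ∈ G, ∀ v ∈ G, ∀ i, u i < v i →
      ∃ j, v j < u j ∧ exch u j i ∈ G ∧ exch v i j ∈ G := by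
  intro u hu v hv i hui
  let M : Matroid (Fin n × ℕ) := Matroid.ofExistsFiniteIsBase Set.univ
      (fun B : Set (Fin n × ℕ) => ∃ F : Finset (Fin n × ℕ), ↑F = B ∧ vecF F ∈ G)
      ⟨↑(blow u), ⟨blow u, rfl, by rw [vecF_blow]; exact hu⟩, (blow u).finite_toSet⟩
      (blow_exchange G hdeg hpoly) (fun _ _ => Set.subset_univ _)
  haveI hfr : M.RankFinite := Matroid.ofExistsFiniteIsBase_rankFinite _ _ _ _ _
  have hA : M.IsBase ↑(blow v) := ⟨blow v, rfl, by rw [vecF_blow]; exact hv⟩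
  have hB : M.IsBase ↑(blow u) := ⟨blow u, rfl, by rw [vecF_blow]; exact hu⟩
  have hxAv : ((i, u i) : Fin n × ℕ) ∈ blow v := mem_blow.mpr hui
  have hxBu : ((i, u i) : Fin n × ℕ) ∉ blow u := fun h => absurd (mem_blow.mp h) (lt_irrefl _)
  have hxA : ((i, u i) : Fin n × ℕ) ∈ (↑(blow v) : Set (Fin n × ℕ)) := Finset.mem_coe.mpr hxAv
  have hxB : ((i, u i) : Fin n × ℕ) ∉ (↑(blow u) : Set (Fin n × ℕ)) :=
    fun h => hxBu (Finset.mem_coe.mp h)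
  obtain ⟨y, hyB, hyA, hb1, hb2⟩ := matroid_symexch hA hB hxA hxB
  rw [Finset.mem_coe] at hyB
  have hyu : y.2 < u y.1 := mem_blow.mp hyB
  have hyv : ¬ y.2 < v y.1 := fun h => hyA (Finset.mem_coe.mpr (mem_blow.mpr h))
  have hyBv : y ∉ blow v := fun h => hyA (Finset.mem_coe.mpr h)
  have hju : v y.1 < u y.1 := lt_of_le_of_lt (Nat.le_of_not_lt hyv) hyu
  refine ⟨y.1, hju, ?_, ?_⟩
  · obtain ⟨F', hF'c, hF'G⟩ := hb2
    have hF' : F' = insert (i, u i) ((blow u).erase y) := by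
      apply Finset.coe_injective
      rw [hF'c]
      simp
    rw [hF'] at hF'G
    have hveq : vecF (insert (i, u i) ((blow u).erase y)) = exch u y.1 i := by
      funext m
      rw [vecF_exch hyB hxBu m, vecF_blow]
      rfl
    rwa [hveq] at hF'G
  · obtain ⟨F', hF'c, hF'G⟩ := hb1
    have hF' : F' = insert y ((blow v).erase (i, u i)) := by
      apply Finset.coe_injective
      rw [hF'c]
      simp
    rw [hF'] at hF'G
    have hveq : vecF (insert y ((blow v).erase (i, u i))) = exch v i y.1 := by
      funext m
      rw [vecF_exch hxAv hyBv m, vecF_blow]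
      rfl
    rwa [hveq] at hF'G
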